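/- Let G be a balanced bipartite graph with parts of size n each. Then the forest number f(G) and the decycling number ∇(G) satisfy f(G) + ∇(G) = 2n; consequently, if the minimum degree is at least n/2 + 1, then ∇(G) = n − 1. -/

import Mathlib

open Finset SimpleGraph

/-- The forest number of `G`: the maximum size of a vertex subset inducing an acyclic
(induced) subgraph. -/
noncomputable def forestNum {V : Type} [Fintype V] (G : SimpleGraph V) : ℕ :=
  sSup {k | ∃ S : Finset V, S.card = k ∧ (G.induce (S : Set V)).IsAcyclic}

/-- The decycling number of `G`: the minimum size of a vertex subset whose removal
leaves an acyclic (induced) subgraph. -/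
noncomputable def decyclingNum {V : Type} [Fintype V] [DecidableEq V] (G : SimpleGraph V) : ℕ :=
  sInf {k | ∃ S : Finset V, S.card = k ∧ (G.induce ((Finset.univ \ S : Finset V) : Set V)).IsAcyclic}


lemma aux_acyclic_mono {V : Type} (G : SimpleGraph V) {s t : Set V} (hst : s ⊆ t)
    (h : (G.induce t).IsAcyclic) : (G.induce s).IsAcyclic := by
  intro v c hc
  let f : G.induce s ↪g G.induce t :=
    ⟨⟨fun a => ⟨a.1, hst a.2⟩, fun a b hab => Subtype.ext (by
      simpa using congrArg Subtype.val hab)⟩, Iff.rfl⟩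
  exact h (c.map f.toHom) (hc.map f.injective)

lemma aux_star_acyclic {W : Type} [DecidableEq W] (H : SimpleGraph W) (v : W)
    (hstar : ∀ a b, H.Adj a b → a = v ∨ b = v) : H.IsAcyclic := by
  intro x c hc
  have h3 := hc.three_le_length
  have hv : v ∈ c.support := by
    cases c with
    | nil => simp at h3
    | cons h q =>
      rcases hstar _ _ h with rfl | rfl
      · exact Walk.start_mem_support _
      · exact Walk.support_cons _ _ ▸ List.mem_cons_of_mem _ q.start_mem_support
  have hc' := hc.rotate hv
  have h3' : 3 ≤ (c.rotate v hv).length := by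
    have := (c.rotate_edges v hv).perm.length_eq
    rw [Walk.length_edges, Walk.length_edges] at this
    omega
  set c' := c.rotate v hv with hcr
  clear_value c'
  cases c' with
  | nil => simp at h3'
  | cons h1 q1 =>
    cases q1 with
    | nil => simp [Walk.length_cons] at h3'
    | cons h2 r =>
      rcases hstar _ _ h2 with rfl | rfl
      · exact h1.ne rfl
      · cases r with
        | nil => simp [Walk.length_cons] at h3'
        | cons h4 r2 =>
          have hnd := hc'.support_nodup
          simp [Walk.support_cons, List.nodup_cons] at hnd

lemma aux_leaf {W : Type} [Fintype W] [Nonempty W] [DecidableEq W] (H : SimpleGraph W)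
    [DecidableRel H.Adj] (hac : H.IsAcyclic) : ∃ x, H.degree x ≤ 1 := by
  by_contra hcon
  push_neg at hcon
  have key : ∀ k : ℕ, ∃ (a b : W) (p : H.Walk a b), p.IsPath ∧ p.length = k := by
    intro k
    induction k with
    | zero => exact ⟨Classical.arbitrary W, _, Walk.nil, Walk.IsPath.nil, rfl⟩
    | succ k ih =>
      obtain ⟨a, b, p, hp, hl⟩ := ih
      by_cases hex : ∃ w, H.Adj a w ∧ w ∉ p.support
      · obtain ⟨w, hw, hws⟩ := hex
        exact ⟨w, b, Walk.cons hw.symm p, (Walk.cons_isPath_iff _ _).2 ⟨hp, hws⟩,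
          by simp [hl]⟩
      · exfalso
        push_neg at hex
        cases p with
        | nil =>
          have hpos : 0 < H.degree a := by have := hcon a; omega
          obtain ⟨w, hw⟩ := Finset.card_pos.1 hpos
          rw [mem_neighborFinset] at hw
          have := hex w hw
          simp at this
          exact hw.ne this.symm
        | cons h' q =>
          rename_i cc
          -- h' : H.Adj a cc, q : Walk cc b
          have h2 : 1 < (H.neighborFinset a).card := hcon a
          obtain ⟨w, hwn, hwc⟩ := Finset.exists_mem_ne h2 cc
          rw [mem_neighborFinset] at hwn
          have hws : w ∈ (Walk.cons h' q).support := hex w hwn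
          set p := Walk.cons h' q with hpdef
          have hcyc : (Walk.cons hwn.symm (p.takeUntil w hws)).IsCycle := by
            rw [Walk.cons_isCycle_iff]
            refine ⟨hp.takeUntil hws, fun hmem => ?_⟩
            have hmem' : s(w, a) ∈ p.edges := Walk.edges_takeUntil_subset p hws hmem
            rw [hpdef, Walk.edges_cons, List.mem_cons] at hmem'
            rcases hmem' with heq | hq
            · rw [Sym2.eq_iff] at heq
              rcases heq with ⟨rfl, _⟩ | ⟨h1, _⟩
              · exact hwn.ne rfl
              · exact hwc h1
            · have : a ∈ q.support := Walk.snd_mem_support_of_mem_edges q hq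
              rw [hpdef, Walk.cons_isPath_iff] at hp
              exact hp.2 this
          exact hac _ hcyc
  obtain ⟨a, b, p, hp, hl⟩ := key (Fintype.card W)
  have := hp.length_lt
  omega

instance aux_induce_decRel {V : Type} (G : SimpleGraph V) [DecidableRel G.Adj] (s : Set V) :
    DecidableRel (G.induce s).Adj := fun a b => (inferInstance : Decidable (G.Adj a b))

lemma aux_leaf_finset {V : Type} [Fintype V] [DecidableEq V] (G : SimpleGraph V)
    [DecidableRel G.Adj] (s : Finset V) (hne : s.Nonempty)
    (hac : (G.induce (↑s : Set V)).IsAcyclic) :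
    ∃ x ∈ s, (s.filter (G.Adj x)).card ≤ 1 := by
  haveI : Nonempty (↑(↑s : Set V)) := ⟨⟨hne.choose, hne.choose_spec⟩⟩
  obtain ⟨⟨x, hx⟩, hdeg⟩ := aux_leaf (G.induce (↑s : Set V)) hac
  refine ⟨x, hx, le_trans ?_ hdeg⟩
  rw [SimpleGraph.degree]
  refine le_trans (Finset.card_le_card (t :=
      ((G.induce (↑s : Set V)).neighborFinset ⟨x, hx⟩).image Subtype.val) ?_)
    Finset.card_image_le
  intro y hy
  rw [Finset.mem_filter] at hy
  exact Finset.mem_image.2 ⟨⟨y, hy.1⟩, (mem_neighborFinset _ _ _).2 hy.2, rfl⟩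

/-- edges of `G` lying within `s` -/
noncomputable def within {V : Type} [Fintype V] [DecidableEq V] (G : SimpleGraph V)
    [DecidableRel G.Adj] (s : Finset V) : Finset (Sym2 V) :=
  G.edgeFinset.filter (fun e => ∀ v ∈ e, v ∈ s)

lemma aux_edge_bound {V : Type} [Fintype V] [DecidableEq V] (G : SimpleGraph V)
    [DecidableRel G.Adj] (s : Finset V) (hac : (G.induce (↑s : Set V)).IsAcyclic)
    (hne : s.Nonempty) : (within G s).card + 1 ≤ s.card := by
  induction s using Finset.strongInduction with
  | _ s ih =>
    obtain ⟨x, hx, hleaf⟩ := aux_leaf_finset G s hne hac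
    by_cases hse : (s.erase x).Nonempty
    · have hsub : (within G s) ⊆ (within G (s.erase x)) ∪
          ((s.filter (G.Adj x)).image (fun w => s(x, w))) := by
        intro e he
        rw [within, Finset.mem_filter] at he
        obtain ⟨hedge, hall⟩ := he
        by_cases hxe : x ∈ e
        · refine Finset.mem_union_right _ (Finset.mem_image.2
            ⟨Sym2.Mem.other hxe, ?_, Sym2.other_spec hxe⟩)
          rw [Finset.mem_filter]
          refine ⟨hall _ (Sym2.other_mem hxe), ?_⟩
          have : s(x, Sym2.Mem.other hxe) ∈ G.edgeSet := by
            rw [Sym2.other_spec hxe]; exact mem_edgeFinset.1 hedge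
          exact this
        · refine Finset.mem_union_left _ ?_
          rw [within, Finset.mem_filter]
          exact ⟨hedge, fun v hv => Finset.mem_erase.2
            ⟨fun h => hxe (h ▸ hv), hall v hv⟩⟩
      have h1 : (within G s).card ≤ (within G (s.erase x)).card + 1 :=
        le_trans (Finset.card_le_card hsub) (le_trans (Finset.card_union_le _ _)
          (by gcongr; exact le_trans Finset.card_image_le hleaf))
      have hac' : (G.induce (↑(s.erase x) : Set V)).IsAcyclic :=
        aux_acyclic_mono G (by exact_mod_cast Finset.erase_subset x s) hac
      have h2 := ih (s.erase x) (Finset.erase_ssubset hx) hac' hse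
      have h3 := Finset.card_erase_of_mem hx
      have h4 : 1 ≤ s.card := Finset.card_pos.2 ⟨x, hx⟩
      omega
    · have hsx : s = {x} := by
        apply Finset.eq_singleton_iff_unique_mem.2
        refine ⟨hx, fun y hy => ?_⟩
        by_contra hne'
        have hse' : s.erase x = ∅ := Finset.not_nonempty_iff_eq_empty.1 hse
        exact absurd (Finset.mem_erase.2 ⟨hne', hy⟩) (by simp [hse'])
      have : within G s = ∅ := by
        rw [Finset.eq_empty_iff_forall_notMem]
        intro e he
        induction e using Sym2.ind with
        | _ a b =>
          rw [within, Finset.mem_filter] at he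
          obtain ⟨hedge, hall⟩ := he
          have ha := hall a (Sym2.mem_mk_left a b)
          have hb := hall b (Sym2.mem_mk_right a b)
          rw [hsx, Finset.mem_singleton] at ha hb
          subst ha; subst hb
          exact G.irrefl (mem_edgeFinset.1 hedge)
      rw [this, hsx]
      simp

lemma aux_no_big_forest {V : Type} [Fintype V] [DecidableEq V] (G : SimpleGraph V)
    [DecidableRel G.Adj] (n : ℕ) (V1 V2 : Finset V)
    (hdisj : Disjoint V1 V2)
    (hc2 : V2.card = n)
    (hbip : ∀ u v, G.Adj u v → (u ∈ V1 ∧ v ∈ V2) ∨ (u ∈ V2 ∧ v ∈ V1))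
    (hdeg : ∀ v, n + 2 ≤ 2 * G.degree v)
    (S : Finset V) (hSV : S ∩ V1 ∪ S ∩ V2 = S) (hcS : S.card = n + 2)
    (hab : (S ∩ V1).card ≤ (S ∩ V2).card) :
    ¬ (G.induce (↑S : Set V)).IsAcyclic := by
  intro hac
  set A := S ∩ V1 with hA
  set B := S ∩ V2 with hB
  have hdisjAB : Disjoint A B :=
    hdisj.mono (Finset.inter_subset_right) (Finset.inter_subset_right)
  have hABcard : A.card + B.card = n + 2 := by
    rw [← Finset.card_union_of_disjoint hdisjAB, hSV, hcS]
  have hBn : B.card ≤ n := hc2 ▸ Finset.card_le_card Finset.inter_subset_right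
  -- the per-vertex lower bound
  have hperu : ∀ u ∈ A, n + 2 ≤ 2 * (B.filter (G.Adj u)).card + 2 * (n - B.card) := by
    intro u hu
    have hu1 : u ∈ V1 := (Finset.mem_inter.1 hu).2
    have hNsub : G.neighborFinset u ⊆ V2 := by
      intro y hy
      rw [mem_neighborFinset] at hy
      rcases hbip u y hy with ⟨_, h2⟩ | ⟨h1, _⟩
      · exact h2
      · exact absurd hu1 (Finset.disjoint_right.1 hdisj h1)
    have hsplit := Finset.card_filter_add_card_filter_not
      (s := G.neighborFinset u) (p := fun y => y ∈ B)
    have h1 : ((G.neighborFinset u).filter (fun y => y ∈ B)).card ≤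
        (B.filter (G.Adj u)).card := by
      apply Finset.card_le_card
      intro y hy
      rw [Finset.mem_filter, mem_neighborFinset] at hy
      exact Finset.mem_filter.2 ⟨hy.2, hy.1⟩
    have h2 : ((G.neighborFinset u).filter (fun y => ¬ y ∈ B)).card ≤
        (V2 \ B).card := by
      apply Finset.card_le_card
      intro y hy
      rw [Finset.mem_filter] at hy
      exact Finset.mem_sdiff.2 ⟨hNsub hy.1, hy.2⟩
    have h3 : (V2 \ B).card = n - B.card := by
      rw [Finset.card_sdiff_of_subset (hB ▸ Finset.inter_subset_right), hc2]
    have hdu := hdeg u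
    rw [SimpleGraph.degree] at hdu
    omega
  -- sum of filter-cards is at most the number of edges within S
  have hsum : ∑ u ∈ A, (B.filter (G.Adj u)).card ≤ (within G S).card := by
    have hinj : ∀ u ∈ A, ((B.filter (G.Adj u)).image (fun w => s(u, w))).card
        = (B.filter (G.Adj u)).card := by
      intro u _
      apply Finset.card_image_of_injOn
      intro w _ w' _ hww'
      exact Sym2.congr_right.1 hww'
    have hdisjF : ∀ u ∈ A, ∀ u' ∈ A, u ≠ u' →
        Disjoint ((B.filter (G.Adj u)).image (fun w => s(u, w)))
          ((B.filter (G.Adj u')).image (fun w => s(u', w))) := by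
      intro u hu u' hu' huu'
      rw [Finset.disjoint_left]
      intro e he he'
      obtain ⟨w, hw, hew⟩ := Finset.mem_image.1 he
      obtain ⟨w', hw', hew'⟩ := Finset.mem_image.1 he'
      rw [← hew'] at hew
      rw [Sym2.eq_iff] at hew
      rcases hew with ⟨h1, _⟩ | ⟨h1, h2⟩
      · exact huu' h1
      · have hw'V2 : w' ∈ V2 := (Finset.mem_inter.1 (Finset.mem_filter.1 hw').1).2
        exact Finset.disjoint_right.1 hdisj (h1.symm ▸ hw'V2) (Finset.mem_inter.1 hu).2
    have hsub : A.biUnion (fun u => (B.filter (G.Adj u)).image (fun w => s(u, w)))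
        ⊆ within G S := by
      intro e he
      obtain ⟨u, hu, he⟩ := Finset.mem_biUnion.1 he
      obtain ⟨w, hw, hew⟩ := Finset.mem_image.1 he
      rw [Finset.mem_filter] at hw
      rw [within, Finset.mem_filter, ← hew]
      refine ⟨mem_edgeFinset.2 hw.2, fun v hv => ?_⟩
      rcases Sym2.mem_iff.1 hv with rfl | rfl
      · exact (Finset.mem_inter.1 hu).1
      · exact (Finset.mem_inter.1 hw.1).1
    calc ∑ u ∈ A, (B.filter (G.Adj u)).card
        = ∑ u ∈ A, ((B.filter (G.Adj u)).image (fun w => s(u, w))).card :=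
          (Finset.sum_congr rfl (fun u hu => (hinj u hu).symm))
      _ = (A.biUnion (fun u => (B.filter (G.Adj u)).image (fun w => s(u, w)))).card :=
          (Finset.card_biUnion hdisjF).symm
      _ ≤ (within G S).card := Finset.card_le_card hsub
  have hup : (within G S).card + 1 ≤ n + 2 := by
    rw [← hcS]
    exact aux_edge_bound G S hac (Finset.card_pos.1 (by omega))
  have hlow : A.card * (n + 2) ≤
      2 * (within G S).card + A.card * (2 * (n - B.card)) := by
    have := Finset.sum_le_sum hperu
    rw [Finset.sum_const, Finset.sum_add_distrib, Finset.sum_const, smul_eq_mul,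
      smul_eq_mul, ← Finset.mul_sum] at this
    omega
  -- final arithmetic contradiction
  obtain ⟨c, hc⟩ : ∃ c, A.card = c + 2 := ⟨A.card - 2, by omega⟩
  have hnb : n - B.card = c := by omega
  obtain ⟨d, hd⟩ : ∃ d, n = 2 * c + 2 + d := ⟨n - (2 * c + 2), by omega⟩
  rw [hc, hnb, hd] at hlow
  nlinarith [hlow, hup]

theorem stmt17 {V : Type} [Fintype V] [DecidableEq V] (G : SimpleGraph V)
    [DecidableRel G.Adj] (n : ℕ) (V1 V2 : Finset V)
    (hdisj : Disjoint V1 V2) (hunion : V1 ∪ V2 = Finset.univ)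
    (hc1 : V1.card = n) (hc2 : V2.card = n)
    (hbip : ∀ u v, G.Adj u v → (u ∈ V1 ∧ v ∈ V2) ∨ (u ∈ V2 ∧ v ∈ V1)) :
    forestNum G + decyclingNum G = 2 * n ∧
      ((∀ v, n + 2 ≤ 2 * G.degree v) → decyclingNum G = n - 1) := by
  classical
  set K : Set ℕ := {k | ∃ S : Finset V, S.card = k ∧ (G.induce (S : Set V)).IsAcyclic}
    with hKdef
  have hcardV : Fintype.card V = 2 * n := by
    rw [← Finset.card_univ, ← hunion, Finset.card_union_of_disjoint hdisj, hc1, hc2]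
    omega
  have hK0 : 0 ∈ K := by
    refine ⟨∅, Finset.card_empty, ?_⟩
    intro x c hc
    exact absurd x.2 (by simp)
  have hKne : K.Nonempty := ⟨0, hK0⟩
  have hKle : ∀ k ∈ K, k ≤ 2 * n := by
    rintro k ⟨S, rfl, -⟩
    calc S.card ≤ Fintype.card V := Finset.card_le_univ S
      _ = 2 * n := hcardV
  have hKbdd : BddAbove K := ⟨2 * n, hKle⟩
  have hfK : forestNum G = sSup K := rfl
  have hfmem : sSup K ∈ K := Nat.sSup_mem hKne hKbdd
  have hfle : sSup K ≤ 2 * n := hKle _ hfmem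
  have hD : decyclingNum G = 2 * n - forestNum G := by
    rw [hfK]
    apply le_antisymm
    · obtain ⟨S, hScard, hSac⟩ := hfmem
      apply Nat.sInf_le
      refine ⟨Finset.univ \ S, ?_, ?_⟩
      · rw [Finset.card_sdiff_of_subset (Finset.subset_univ S), Finset.card_univ, hcardV, hScard]
      · have : Finset.univ \ (Finset.univ \ S) = S := by
          ext x; simp
        rw [this]
        exact hSac
    · apply le_csInf
      · refine ⟨2 * n, Finset.univ, ?_, ?_⟩
        · rw [Finset.card_univ, hcardV]
        · rw [Finset.sdiff_self]
          intro x c hc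
          exact absurd x.2 (by simp)
      · rintro k ⟨S, rfl, hSac⟩
        have h1 : (Finset.univ \ S).card ∈ K := ⟨_, rfl, hSac⟩
        have h2 := hKle _ h1
        have h3 := le_csSup hKbdd h1
        have h4 : (Finset.univ \ S).card = 2 * n - S.card := by
          rw [Finset.card_sdiff_of_subset (Finset.subset_univ S), Finset.card_univ, hcardV]
        have h5 : S.card ≤ 2 * n := by
          calc S.card ≤ Fintype.card V := Finset.card_le_univ S
            _ = 2 * n := hcardV
        omega
  constructor
  · rw [hD, hfK]; omega
  · intro hdeg
    rcases Nat.eq_zero_or_pos n with rfl | hn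
    · have : forestNum G = 0 := by rw [hfK]; omega
      rw [hD, this]
    · -- n ≥ 1 : show forestNum G = n + 1
      have hupper : ∀ k ∈ K, k ≤ n + 1 := by
        rintro k ⟨S, rfl, hSac⟩
        by_contra hbig
        push_neg at hbig
        obtain ⟨S', hS'sub, hS'card⟩ := Finset.exists_subset_card_eq (n := n + 2)
          (by omega : n + 2 ≤ S.card)
        have hS'ac : (G.induce (↑S' : Set V)).IsAcyclic :=
          aux_acyclic_mono G (by exact_mod_cast hS'sub) hSac
        have hSV1 : S' ∩ V1 ∪ S' ∩ V2 = S' := by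
          rw [← Finset.inter_union_distrib_left, hunion, Finset.inter_univ]
        have hSV2 : S' ∩ V2 ∪ S' ∩ V1 = S' := by
          rw [Finset.union_comm]; exact hSV1
        rcases le_total (S' ∩ V1).card (S' ∩ V2).card with hab | hab
        · exact aux_no_big_forest G n V1 V2 hdisj hc2 hbip hdeg S' hSV1 hS'card hab hS'ac
        · exact aux_no_big_forest G n V2 V1 hdisj.symm hc1
            (fun u v h => Or.symm (hbip u v h)) hdeg S' hSV2 hS'card hab hS'ac
      have hlower : n + 1 ∈ K := by
        obtain ⟨v, hv⟩ := Finset.card_pos.1 (hc1 ▸ hn)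
        have hvV2 : v ∉ V2 := Finset.disjoint_left.1 hdisj hv
        refine ⟨insert v V2, ?_, ?_⟩
        · rw [Finset.card_insert_of_notMem hvV2, hc2]
        · apply aux_star_acyclic _ (⟨v, by simp⟩ : ↑(↑(insert v V2) : Set V))
          rintro ⟨a, ha⟩ ⟨b, hb⟩ hab
          have hab' : G.Adj a b := hab
          have key : ∀ x : V, x ∈ insert v V2 → x ∈ V1 → x = v := by
            intro x hx hx1
            rcases Finset.mem_insert.1 hx with rfl | hx2
            · rfl
            · exact absurd hx1 (Finset.disjoint_right.1 hdisj hx2)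
          have ha' : a ∈ insert v V2 := by exact_mod_cast ha
          have hb' : b ∈ insert v V2 := by exact_mod_cast hb
          rcases hbip a b hab' with ⟨h1, _⟩ | ⟨_, h2⟩
          · exact Or.inl (Subtype.ext (key a ha' h1))
          · exact Or.inr (Subtype.ext (key b hb' h2))
      have hfeq : forestNum G = n + 1 := by
        rw [hfK]
        exact le_antisymm (csSup_le hKne hupper) (le_csSup hKbdd hlower)
      rw [hD, hfeq]
      omega
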